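/- For 0 < α < 2, α ≠ 1, -1 ≤ β ≤ 1 and -α < d < 0, with θ₀ = α^{-1} arctan(β tan(πα/2)): ∫_0^∞ [cos(β tan(πα/2) r^α) - 1] r^{d-1} e^{-r^α} dr = [(cos αθ₀)^{d/α} cos(dθ₀) - 1] Γ(1 + d/α)/d. -/

import Mathlib

open Real MeasureTheory Set Filter Complex Topology

lemma aux_meas (b t : ℝ) : AEStronglyMeasurable
    (fun u : ℝ => (u:ℂ) ^ (b:ℂ) * Complex.exp ((t*I-1)*u)) (volume.restrict (Ioi 0)) := by
  refine (ContinuousOn.mul ?_ ?_).aestronglyMeasurable measurableSet_Ioi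
  · intro u hu
    exact ((continuousAt_cpow_const (by
      simp [Complex.mem_slitPlane_iff, mem_Ioi.mp hu])).comp
      Complex.continuous_ofReal.continuousAt).continuousWithinAt
  · exact (Continuous.cexp (by continuity)).continuousOn

lemma aux_norm (b t : ℝ) {u : ℝ} (hu : 0 < u) :
    ‖(u:ℂ) ^ (b:ℂ) * Complex.exp ((t*I-1)*u)‖ = u ^ b * Real.exp (-u) := by
  rw [norm_mul, Complex.norm_cpow_eq_rpow_re_of_pos hu, Complex.norm_exp]
  have h1 : ((t*I-1)*(u:ℂ)).re = -u := by simp [Complex.mul_re]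
  rw [h1]; simp

lemma aux_int (b t : ℝ) (hb : -1 < b) :
    IntegrableOn (fun u : ℝ => (u:ℂ) ^ (b:ℂ) * Complex.exp ((t*I-1)*u)) (Ioi 0) := by
  have hint : IntegrableOn (fun u : ℝ => Real.exp (-u) * u ^ b) (Ioi 0) := by
    have := Real.GammaIntegral_convergent (s := b+1) (by linarith)
    simpa using this
  refine Integrable.mono' hint (aux_meas b t) ?_
  filter_upwards [ae_restrict_mem measurableSet_Ioi] with u hu
  rw [aux_norm b t (mem_Ioi.mp hu), mul_comm]

lemma one_sub_ne (t : ℝ) : (1 : ℂ) - t*I ≠ 0 := by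
  intro h
  have := congrArg Complex.re h
  simp at this

lemma aux_ibp (a t : ℝ) (ha : 0 < a) :
    (1 - (t:ℂ)*I) * ∫ u in Ioi (0:ℝ), (u:ℂ) ^ (a:ℂ) * Complex.exp (((t:ℂ)*I-1)*u)
      = (a:ℂ) * ∫ u in Ioi (0:ℝ), (u:ℂ) ^ ((a:ℂ)-1) * Complex.exp (((t:ℂ)*I-1)*u) := by
  have haC : (a:ℂ) ≠ 0 := by exact_mod_cast ha.ne'
  have hderiv : ∀ u ∈ Ioi (0:ℝ), HasDerivAt
      (fun u : ℝ => (u:ℂ) ^ (a:ℂ) * Complex.exp (((t:ℂ)*I-1)*u))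
      ((a:ℂ) * (u:ℂ) ^ ((a:ℂ)-1) * Complex.exp (((t:ℂ)*I-1)*u)
        + (u:ℂ) ^ (a:ℂ) * (((t:ℂ)*I-1) * Complex.exp (((t:ℂ)*I-1)*u))) u := by
    intro u hu
    rw [mem_Ioi] at hu
    have h1 : HasDerivAt (fun u : ℝ => (u:ℂ) ^ (a:ℂ)) ((a:ℂ) * (u:ℂ) ^ ((a:ℂ)-1)) u := by
      have h0 : HasDerivAt (fun z : ℂ => z ^ (a:ℂ)) ((a:ℂ) * (u:ℂ) ^ ((a:ℂ)-1)) (u:ℂ) := by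
        simpa using (hasDerivAt_id ((u:ℝ):ℂ)).cpow_const
          (by simp [Complex.mem_slitPlane_iff, hu])
      exact h0.comp_ofReal
    have h2 : HasDerivAt (fun u : ℝ => Complex.exp (((t:ℂ)*I-1)*u))
        (((t:ℂ)*I-1) * Complex.exp (((t:ℂ)*I-1)*u)) u := by
      have : HasDerivAt (fun u : ℝ => ((t:ℂ)*I-1)*(u:ℝ)) ((t:ℂ)*I-1) u := by
        simpa using (Complex.ofRealCLM.hasDerivAt (x := u)).const_mul ((t:ℂ)*I-1)
      simpa [mul_comm] using this.cexp
    exact h1.mul h2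
  have hval : ((0:ℝ):ℂ) ^ (a:ℂ) * Complex.exp (((t:ℂ)*I-1)*((0:ℝ):ℂ)) = 0 := by
    simp [Complex.zero_cpow haC]
  have hcont : ContinuousWithinAt
      (fun u : ℝ => (u:ℂ) ^ (a:ℂ) * Complex.exp (((t:ℂ)*I-1)*u)) (Ici 0) 0 := by
    rw [ContinuousWithinAt, hval]
    apply squeeze_zero_norm' (a := fun u : ℝ => u ^ a)
    · filter_upwards [self_mem_nhdsWithin] with u (hu : u ∈ Ici 0)
      rcases eq_or_lt_of_le (mem_Ici.mp hu) with h | h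
      · simp [← h, Complex.zero_cpow haC, Real.zero_rpow ha.ne']
      · rw [norm_mul, Complex.norm_cpow_eq_rpow_re_of_pos h, Complex.norm_exp]
        have h1 : (((t:ℂ)*I-1)*(u:ℂ)).re = -u := by simp [Complex.mul_re]
        rw [h1]
        simp only [Complex.ofReal_re]
        nth_rewrite 2 [show u ^ a = u ^ a * 1 by ring]
        gcongr
        exact Real.exp_le_one_iff.mpr (by linarith)
    · have hc : ContinuousWithinAt (fun u : ℝ => u ^ a) (Ici 0) 0 :=
        (Real.continuousAt_rpow_const 0 a (Or.inr ha.le)).continuousWithinAt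
      simpa [ContinuousWithinAt, Real.zero_rpow ha.ne'] using hc
  have htop : Tendsto (fun u : ℝ => (u:ℂ) ^ (a:ℂ) * Complex.exp (((t:ℂ)*I-1)*u))
      atTop (𝓝 0) := by
    apply squeeze_zero_norm' (a := fun u : ℝ => u ^ a * Real.exp (-1*u))
    · filter_upwards [eventually_gt_atTop (0:ℝ)] with u hu
      rw [norm_mul, Complex.norm_cpow_eq_rpow_re_of_pos hu, Complex.norm_exp]
      have h1 : (((t:ℂ)*I-1)*(u:ℂ)).re = -u := by simp [Complex.mul_re]
      rw [h1]
      simp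
    · exact tendsto_rpow_mul_exp_neg_mul_atTop_nhds_zero a 1 one_pos
  have hint1 := aux_int (a-1) t (by linarith)
  have hint2 := aux_int a t (by linarith)
  have hint1' : IntegrableOn
      (fun u : ℝ => (a:ℂ) * (u:ℂ) ^ ((a:ℂ)-1) * Complex.exp (((t:ℂ)*I-1)*u)) (Ioi 0) := by
    refine IntegrableOn.congr_fun
      (f := fun u : ℝ => (a:ℂ) * ((u:ℂ) ^ (((a-1):ℝ):ℂ) * Complex.exp (((t:ℂ)*I-1)*u)))
      (hint1.const_mul _) (fun u hu => by push_cast; ring) measurableSet_Ioi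
  have hint2' : IntegrableOn
      (fun u : ℝ => (u:ℂ) ^ (a:ℂ) * (((t:ℂ)*I-1) * Complex.exp (((t:ℂ)*I-1)*u))) (Ioi 0) := by
    refine IntegrableOn.congr_fun
      (f := fun u : ℝ => ((t:ℂ)*I-1) * ((u:ℂ) ^ ((a:ℝ):ℂ) * Complex.exp (((t:ℂ)*I-1)*u)))
      (hint2.const_mul _) (fun u hu => by push_cast; ring) measurableSet_Ioi
  have key := integral_Ioi_of_hasDerivAt_of_tendsto hcont hderiv (hint1'.add hint2') htop
  rw [hval, sub_zero] at key
  rw [integral_add hint1' hint2'] at key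
  have e1 : ∫ u in Ioi (0:ℝ), (a:ℂ) * (u:ℂ) ^ ((a:ℂ)-1) * Complex.exp (((t:ℂ)*I-1)*u)
      = (a:ℂ) * ∫ u in Ioi (0:ℝ), (u:ℂ) ^ ((a:ℂ)-1) * Complex.exp (((t:ℂ)*I-1)*u) := by
    rw [← integral_const_mul]
    exact setIntegral_congr_fun measurableSet_Ioi fun u _ => by ring
  have e2 : ∫ u in Ioi (0:ℝ), (u:ℂ) ^ (a:ℂ) * (((t:ℂ)*I-1) * Complex.exp (((t:ℂ)*I-1)*u))
      = ((t:ℂ)*I-1) * ∫ u in Ioi (0:ℝ), (u:ℂ) ^ (a:ℂ) * Complex.exp (((t:ℂ)*I-1)*u) := by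
    rw [← integral_const_mul]
    exact setIntegral_congr_fun measurableSet_Ioi fun u _ => by ring
  rw [e1, e2] at key
  linear_combination -key

noncomputable def Ff (a : ℝ) (t : ℝ) : ℂ :=
  ∫ u in Ioi (0:ℝ), (u:ℂ) ^ ((a:ℂ)-1) * Complex.exp (((t:ℂ)*I-1)*u)

lemma Ff_zero (a : ℝ) (ha : 0 < a) : Ff a 0 = (Real.Gamma a : ℂ) := by
  rw [Ff, ← Complex.Gamma_ofReal, Complex.Gamma_eq_integral (by simpa using ha),
    Complex.GammaIntegral]
  refine setIntegral_congr_fun measurableSet_Ioi fun u hu => ?_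
  rw [mem_Ioi] at hu
  have : (((0:ℝ):ℂ)*I-1) * u = ((-u : ℝ) : ℂ) := by push_cast; ring
  rw [this, ← Complex.ofReal_exp]
  ring

lemma Ff_hasDeriv (a : ℝ) (ha : 0 < a) (t : ℝ) :
    HasDerivAt (Ff a) (I * ((a:ℂ)/(1-(t:ℂ)*I)) * Ff a t) t := by
  have hres := hasDerivAt_integral_of_dominated_loc_of_deriv_le (μ := volume.restrict (Ioi 0))
    (F := fun (t : ℝ) (u : ℝ) => (u:ℂ) ^ ((a:ℂ)-1) * Complex.exp (((t:ℂ)*I-1)*u))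
    (F' := fun (t : ℝ) (u : ℝ) => I * ((u:ℂ) ^ ((a:ℝ):ℂ) * Complex.exp (((t:ℂ)*I-1)*u)))
    (x₀ := t) (bound := fun u => u ^ a * Real.exp (-u)) (s := Metric.ball t 1) (Metric.ball_mem_nhds t one_pos)
    ?_ ?_ ?_ ?_ ?_ ?_
  · obtain ⟨-, hd⟩ := hres
    have heq : ∫ u in Ioi (0:ℝ), I * ((u:ℂ) ^ ((a:ℝ):ℂ) * Complex.exp (((t:ℂ)*I-1)*u))
        = I * ((a:ℂ)/(1-(t:ℂ)*I)) * Ff a t := by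
      rw [integral_const_mul]
      have hibp := aux_ibp a t ha
      have hne := one_sub_ne t
      rw [Ff, mul_assoc I, div_mul_eq_mul_div, ← hibp, mul_div_cancel_left₀ _ hne]
    rw [heq] at hd
    exact hd
  · filter_upwards with t'
    have := aux_meas (a-1) t'
    refine this.congr ?_
    filter_upwards [ae_restrict_mem measurableSet_Ioi] with u hu
    push_cast
    ring
  · exact (aux_int (a-1) t (by linarith)).congr_fun (fun u hu => by push_cast; ring)
      measurableSet_Ioi
  · refine ((aux_meas a t).const_mul I).congr ?_
    filter_upwards [ae_restrict_mem measurableSet_Ioi] with u hu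
    push_cast; ring
  · filter_upwards [ae_restrict_mem measurableSet_Ioi] with u hu t' _
    rw [mem_Ioi] at hu
    rw [norm_mul, Complex.norm_I, one_mul]
    have := aux_norm a t' (u := u) hu
    push_cast at this ⊢
    rw [this]
  · have hb : IntegrableOn (fun u : ℝ => Real.exp (-u) * u ^ a) (Ioi 0) :=
      by simpa using Real.GammaIntegral_convergent (s := a+1) (by linarith)
    exact hb.congr_fun (fun u hu => mul_comm _ _) measurableSet_Ioi
  · filter_upwards [ae_restrict_mem measurableSet_Ioi] with u hu t' _
    rw [mem_Ioi] at hu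
    have h2 : HasDerivAt (fun t' : ℝ => Complex.exp (((t':ℂ)*I-1)*u))
        ((u:ℂ)*I * Complex.exp (((t':ℂ)*I-1)*u)) t' := by
      have hlin : HasDerivAt (fun t' : ℝ => ((t':ℂ)*I-1)*(u:ℂ)) ((u:ℂ)*I) t' := by
        have : HasDerivAt (fun t' : ℝ => ((t':ℂ))) 1 t' := Complex.ofRealCLM.hasDerivAt
        simpa [mul_comm, mul_assoc, mul_left_comm] using ((this.mul_const I).sub_const 1).mul_const (u:ℂ)
      simpa [mul_comm] using hlin.cexp
    have := (h2.const_mul ((u:ℂ) ^ ((a:ℂ)-1)))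
    refine this.congr_deriv ?_
    symm
    have hcu : (u:ℂ) ≠ 0 := by exact_mod_cast hu.ne'
    rw [show ((a:ℝ):ℂ) = ((a:ℂ)-1) + 1 by ring, Complex.cpow_add _ _ hcu]
    simp [Complex.cpow_one]
    ring

lemma keyF (a t : ℝ) (ha : 0 < a) :
    Ff a t = (Real.Gamma a : ℂ) / (1-(t:ℂ)*I) ^ ((a:ℝ):ℂ) := by
  have hslit : ∀ t : ℝ, (1-(t:ℂ)*I) ∈ Complex.slitPlane := by
    intro t'; simp [Complex.mem_slitPlane_iff]
  have hzderiv : ∀ t : ℝ, HasDerivAt (fun t : ℝ => (1-(t:ℂ)*I) ^ ((a:ℝ):ℂ))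
      (((a:ℝ):ℂ) * (1-(t:ℂ)*I) ^ (((a:ℝ):ℂ)-1) * (-I)) t := by
    intro t'
    have hbase : HasDerivAt (fun t : ℝ => 1-(t:ℂ)*I) (-I) t' := by
      simpa using ((Complex.ofRealCLM.hasDerivAt (x := t')).mul_const I).const_sub 1
    have hz : HasDerivAt (fun z : ℂ => z ^ ((a:ℝ):ℂ))
        (((a:ℝ):ℂ) * (1-(t':ℂ)*I) ^ (((a:ℝ):ℂ)-1)) (1-(t':ℂ)*I) :=
      (Complex.hasStrictDerivAt_cpow_const (hslit t')).hasDerivAt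
    have := hz.comp t' hbase
    exact this
  have hΦ : ∀ t : ℝ, HasDerivAt (fun t : ℝ => Ff a t * (1-(t:ℂ)*I) ^ ((a:ℝ):ℂ)) 0 t := by
    intro t'
    have h := (Ff_hasDeriv a ha t').mul (hzderiv t')
    refine h.congr_deriv ?_
    symm
    have hne := one_sub_ne t'
    rw [Complex.cpow_sub _ _ hne, Complex.cpow_one]
    field_simp
    ring
  have hconst : ∀ t : ℝ, Ff a t * (1-(t:ℂ)*I) ^ ((a:ℝ):ℂ)
      = Ff a 0 * (1-(0:ℂ)*I) ^ ((a:ℝ):ℂ) := by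
    intro t'
    have := is_const_of_deriv_eq_zero (f := fun t : ℝ => Ff a t * (1-(t:ℂ)*I) ^ ((a:ℝ):ℂ))
      (fun x => (hΦ x).differentiableAt) (fun x => (hΦ x).deriv) t' 0
    simpa using this
  have h := hconst t
  rw [Ff_zero a ha] at h
  simp only [zero_mul, sub_zero, Complex.one_cpow, mul_one] at h
  rw [eq_div_iff]
  · exact h
  · intro hc
    rw [Complex.cpow_eq_zero_iff] at hc
    exact one_sub_ne t hc.1



lemma exp_diff_bound (x : ℝ) : ‖Complex.exp ((x:ℂ)*I) - 1‖ ≤ 2 * |x| := by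
  rcases le_or_gt ‖(x:ℂ)*I‖ 1 with h | h
  · have := Complex.norm_exp_sub_one_le (x := (x:ℂ)*I) (by simpa using h)
    simpa using this
  · have h1 : ‖Complex.exp ((x:ℂ)*I) - 1‖ ≤ ‖Complex.exp ((x:ℂ)*I)‖ + 1 :=
      (norm_sub_le _ _).trans (by simp)
    have h2 : ‖Complex.exp ((x:ℂ)*I)‖ = 1 := by
      rw [Complex.norm_exp]
      simp [Complex.mul_re]
    rw [h2] at h1
    have : (1:ℝ) < |x| := by simpa using h
    linarith

noncomputable def Gg (s : ℝ) (t : ℝ) : ℂ :=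
  ∫ u in Ioi (0:ℝ), (u:ℂ) ^ ((s:ℂ)-1) * (Complex.exp (((t:ℂ)*I-1)*u) - Complex.exp (-(u:ℂ)))

lemma Gg_integrand_eq (s t : ℝ) {u : ℝ} (hu : 0 < u) :
    (u:ℂ) ^ ((s:ℂ)-1) * (Complex.exp (((t:ℂ)*I-1)*u) - Complex.exp (-(u:ℂ)))
      = Complex.exp (-(u:ℂ)) * ((u:ℂ) ^ ((s:ℂ)-1) * (Complex.exp ((((t*u):ℝ):ℂ)*I) - 1)) := by
  have : ((t:ℂ)*I-1)*u = ((t*u:ℝ):ℂ)*I + (-(u:ℂ)) := by push_cast; ring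
  rw [this, Complex.exp_add]
  ring

lemma Gg_integrable (s t : ℝ) (hs : -1 < s) :
    IntegrableOn (fun u : ℝ =>
      (u:ℂ) ^ ((s:ℂ)-1) * (Complex.exp (((t:ℂ)*I-1)*u) - Complex.exp (-(u:ℂ)))) (Ioi 0) := by
  have hmeas : AEStronglyMeasurable (fun u : ℝ =>
      (u:ℂ) ^ ((s:ℂ)-1) * (Complex.exp (((t:ℂ)*I-1)*u) - Complex.exp (-(u:ℂ))))
      (volume.restrict (Ioi 0)) := by
    have h1 := aux_meas (s-1) t
    have h2 := aux_meas (s-1) 0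
    have := h1.sub h2
    refine this.congr ?_
    filter_upwards [ae_restrict_mem measurableSet_Ioi] with u hu
    simp only [Pi.sub_apply]
    push_cast
    ring_nf
  have hbint : IntegrableOn (fun u : ℝ => 2*|t| * (Real.exp (-u) * u ^ s)) (Ioi 0) := by
    refine Integrable.const_mul ?_ _
    simpa [IntegrableOn] using Real.GammaIntegral_convergent (s := s+1) (by linarith)
  refine Integrable.mono' hbint hmeas ?_
  filter_upwards [ae_restrict_mem measurableSet_Ioi] with u hu
  rw [mem_Ioi] at hu
  rw [Gg_integrand_eq s t hu]
  rw [norm_mul, norm_mul]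
  have e1 : ‖Complex.exp (-(u:ℂ))‖ = Real.exp (-u) := by
    rw [Complex.norm_exp]; simp
  have e2 : ‖(u:ℂ) ^ ((s:ℂ)-1)‖ = u ^ (s-1) := by
    rw [Complex.norm_cpow_eq_rpow_re_of_pos hu]
    norm_num
  rw [e1, e2]
  have e3 : ‖Complex.exp ((((t*u):ℝ):ℂ)*I) - 1‖ ≤ 2*|t*u| := exp_diff_bound (t*u)
  calc Real.exp (-u) * (u ^ (s-1) * ‖Complex.exp ((((t*u):ℝ):ℂ)*I) - 1‖)
      ≤ Real.exp (-u) * (u ^ (s-1) * (2*|t*u|)) := by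
        gcongr
    _ = 2*|t| * (Real.exp (-u) * (u ^ (s-1) * u)) := by
        rw [abs_mul, abs_of_pos hu]; ring
    _ = 2*|t| * (Real.exp (-u) * u ^ s) := by
        rw [← Real.rpow_add_one hu.ne' (s-1)]
        norm_num

lemma Gg_hasDeriv (s : ℝ) (hs1 : -1 < s) (t : ℝ) :
    HasDerivAt (Gg s) (I * ((Real.Gamma (s+1) : ℂ) / (1-(t:ℂ)*I) ^ (((s+1):ℝ):ℂ))) t := by
  have hres := hasDerivAt_integral_of_dominated_loc_of_deriv_le (μ := volume.restrict (Ioi 0))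
    (F := fun (t : ℝ) (u : ℝ) =>
      (u:ℂ) ^ ((s:ℂ)-1) * (Complex.exp (((t:ℂ)*I-1)*u) - Complex.exp (-(u:ℂ))))
    (F' := fun (t : ℝ) (u : ℝ) => I * ((u:ℂ) ^ ((s:ℝ):ℂ) * Complex.exp (((t:ℂ)*I-1)*u)))
    (x₀ := t) (bound := fun u => u ^ s * Real.exp (-u)) (s := Metric.ball t 1) (Metric.ball_mem_nhds t one_pos)
    ?_ ?_ ?_ ?_ ?_ ?_
  · obtain ⟨-, hd⟩ := hres
    have heq : ∫ u in Ioi (0:ℝ), I * ((u:ℂ) ^ ((s:ℝ):ℂ) * Complex.exp (((t:ℂ)*I-1)*u))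
        = I * ((Real.Gamma (s+1) : ℂ) / (1-(t:ℂ)*I) ^ (((s+1):ℝ):ℂ)) := by
      rw [integral_const_mul, ← keyF (s+1) t (by linarith)]
      rw [Ff]
      congr 1
      refine setIntegral_congr_fun measurableSet_Ioi fun u hu => ?_
      push_cast
      ring_nf
    rw [heq] at hd
    exact hd
  · filter_upwards with t'
    refine ((aux_meas (s-1) t').sub (aux_meas (s-1) 0)).congr ?_
    filter_upwards [ae_restrict_mem measurableSet_Ioi] with u hu
    simp only [Pi.sub_apply]
    push_cast
    ring_nf
  · exact Gg_integrable s t hs1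
  · refine ((aux_meas s t).const_mul I).congr ?_
    filter_upwards [ae_restrict_mem measurableSet_Ioi] with u hu
    push_cast; ring
  · filter_upwards [ae_restrict_mem measurableSet_Ioi] with u hu t' _
    rw [mem_Ioi] at hu
    rw [norm_mul, Complex.norm_I, one_mul]
    have := aux_norm s t' (u := u) hu
    push_cast at this ⊢
    rw [this]
  · have hb : IntegrableOn (fun u : ℝ => Real.exp (-u) * u ^ s) (Ioi 0) :=
      by simpa using Real.GammaIntegral_convergent (s := s+1) (by linarith)
    exact hb.congr_fun (fun u hu => mul_comm _ _) measurableSet_Ioi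
  · filter_upwards [ae_restrict_mem measurableSet_Ioi] with u hu t' _
    rw [mem_Ioi] at hu
    have h2 : HasDerivAt (fun t' : ℝ => Complex.exp (((t':ℂ)*I-1)*u))
        ((u:ℂ)*I * Complex.exp (((t':ℂ)*I-1)*u)) t' := by
      have hlin : HasDerivAt (fun t' : ℝ => ((t':ℂ)*I-1)*(u:ℂ)) ((u:ℂ)*I) t' := by
        have : HasDerivAt (fun t' : ℝ => ((t':ℂ))) 1 t' := Complex.ofRealCLM.hasDerivAt
        simpa [mul_comm, mul_assoc, mul_left_comm] using
          ((this.mul_const I).sub_const 1).mul_const (u:ℂ)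
      simpa [mul_comm] using hlin.cexp
    have h3 : HasDerivAt (fun t' : ℝ =>
        (u:ℂ) ^ ((s:ℂ)-1) * (Complex.exp (((t':ℂ)*I-1)*u) - Complex.exp (-(u:ℂ))))
        ((u:ℂ) ^ ((s:ℂ)-1) * ((u:ℂ)*I * Complex.exp (((t':ℂ)*I-1)*u))) t' := by
      exact ((h2.sub_const _).const_mul _)
    refine h3.congr_deriv ?_
    symm
    have hcu : (u:ℂ) ≠ 0 := by exact_mod_cast hu.ne'
    rw [show ((s:ℝ):ℂ) = ((s:ℂ)-1) + 1 by ring, Complex.cpow_add _ _ hcu]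
    simp [Complex.cpow_one]
    ring

lemma keyG (s t : ℝ) (hs1 : -1 < s) (hs0 : s ≠ 0) :
    Gg s t = ((Real.Gamma (s+1) : ℂ) / s) * ((1-(t:ℂ)*I) ^ ((-s:ℝ):ℂ) - 1) := by
  set K : ℝ → ℂ := fun t => ((Real.Gamma (s+1) : ℂ) / s) * ((1-(t:ℂ)*I) ^ ((-s:ℝ):ℂ) - 1)
    with hK
  have hsC : (s:ℂ) ≠ 0 := by exact_mod_cast hs0
  have hKderiv : ∀ t : ℝ, HasDerivAt K
      (I * ((Real.Gamma (s+1) : ℂ) / (1-(t:ℂ)*I) ^ (((s+1):ℝ):ℂ))) t := by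
    intro t'
    have hslit : (1-(t':ℂ)*I) ∈ Complex.slitPlane := by simp [Complex.mem_slitPlane_iff]
    have hbase : HasDerivAt (fun t : ℝ => 1-(t:ℂ)*I) (-I) t' := by
      simpa using ((Complex.ofRealCLM.hasDerivAt (x := t')).mul_const I).const_sub 1
    have hz : HasDerivAt (fun z : ℂ => z ^ ((-s:ℝ):ℂ))
        (((-s:ℝ):ℂ) * (1-(t':ℂ)*I) ^ (((-s:ℝ):ℂ)-1)) (1-(t':ℂ)*I) :=
      (Complex.hasStrictDerivAt_cpow_const hslit).hasDerivAt
    have hcomp := hz.comp t' hbase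
    have := ((hcomp.sub_const 1).const_mul ((Real.Gamma (s+1) : ℂ) / s))
    refine this.congr_deriv ?_
    symm
    have hne := one_sub_ne t'
    rw [show (((-s:ℝ)):ℂ) - 1 = -((((s+1):ℝ):ℂ)) by push_cast; ring,
      Complex.cpow_neg]
    have hpow : (1-(t':ℂ)*I) ^ ((((s+1):ℝ)):ℂ) ≠ 0 := by
      intro hc
      rw [Complex.cpow_eq_zero_iff] at hc
      exact hne hc.1
    push_cast
    field_simp
  have hdiff : ∀ t : ℝ, HasDerivAt (fun t => Gg s t - K t) 0 t := by
    intro t'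
    have := (Gg_hasDeriv s hs1 t').sub (hKderiv t')
    exact this.congr_deriv (sub_self _)
  have hconst := is_const_of_deriv_eq_zero (f := fun t => Gg s t - K t)
    (fun x => (hdiff x).differentiableAt) (fun x => (hdiff x).deriv) t 0
  have hG0 : Gg s 0 = 0 := by
    rw [Gg]
    have : ∀ u : ℝ, u ∈ Ioi (0:ℝ) →
        (u:ℂ) ^ ((s:ℂ)-1) * (Complex.exp ((((0:ℝ):ℂ)*I-1)*u) - Complex.exp (-(u:ℂ))) = 0 := by
      intro u hu
      have h0 : (((0:ℝ):ℂ)*I-1)*u = -(u:ℂ) := by push_cast; ring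
      rw [h0]; ring
    rw [setIntegral_congr_fun measurableSet_Ioi this]
    simp
  have hK0 : K 0 = 0 := by
    simp [hK]
  rw [hG0, hK0, sub_zero] at hconst
  exact sub_eq_zero.mp hconst



lemma cpow_real_re {z : ℂ} (hz : z ≠ 0) (w : ℝ) :
    (z ^ ((w:ℝ):ℂ)).re = ‖z‖ ^ w * Real.cos (w * Complex.arg z) := by
  rw [Complex.cpow_def_of_ne_zero hz, Complex.exp_re]
  have h1 : (Complex.log z * w).re = Real.log ‖z‖ * w := by
    simp [Complex.mul_re, Complex.log_re]
  have h2 : (Complex.log z * w).im = Complex.arg z * w := by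
    simp [Complex.mul_im, Complex.log_im]
  rw [h1, h2, Real.rpow_def_of_pos (norm_pos_iff.mpr hz), mul_comm w]

lemma abs_one_sub (t : ℝ) : ‖1 - (t:ℂ)*I‖ = Real.sqrt (1 + t^2) := by
  rw [Complex.norm_def, Complex.normSq_apply]
  congr 1
  simp
  ring

lemma arg_one_sub (t : ℝ) : Complex.arg (1 - (t:ℂ)*I) = -Real.arctan t := by
  have hsq : (0:ℝ) < Real.sqrt (1 + t^2) := Real.sqrt_pos.mpr (by positivity)
  have hz : (1 : ℂ) - t*I = (Real.sqrt (1 + t^2) : ℝ) *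
      (Complex.cos ((-Real.arctan t : ℝ) : ℂ) + Complex.sin ((-Real.arctan t : ℝ) : ℂ) * I) := by
    rw [← Complex.ofReal_cos, ← Complex.ofReal_sin]
    apply Complex.ext
    · simp only [Complex.mul_re, Complex.mul_im, Complex.add_re, Complex.add_im,
        Complex.ofReal_re, Complex.ofReal_im, Complex.I_re, Complex.I_im, Complex.sub_re,
        Complex.sub_im, Complex.one_re, Complex.one_im, mul_zero, mul_one, zero_mul,
        sub_zero, zero_sub, add_zero, zero_add, Real.cos_neg, Real.sin_neg]
      rw [Real.cos_arctan]
      field_simp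
    · simp only [Complex.mul_re, Complex.mul_im, Complex.add_re, Complex.add_im,
        Complex.ofReal_re, Complex.ofReal_im, Complex.I_re, Complex.I_im, Complex.sub_re,
        Complex.sub_im, Complex.one_re, Complex.one_im, mul_zero, mul_one, zero_mul,
        sub_zero, zero_sub, add_zero, zero_add, Real.cos_neg, Real.sin_neg]
      rw [Real.sin_arctan]
      field_simp
  rw [hz, Complex.arg_real_mul _ hsq, Complex.arg_cos_add_sin_mul_I]
  constructor
  · have := Real.arctan_lt_pi_div_two t
    have := Real.pi_pos
    linarith
  · have := Real.neg_pi_div_two_lt_arctan t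
    have := Real.pi_pos
    linarith

theorem stmt_12 (α β d : ℝ) (hα0 : 0 < α) (hα2 : α < 2) (hα1 : α ≠ 1)
    (hβ : β ∈ Set.Icc (-1 : ℝ) 1) (hd : -α < d) (hd0 : d < 0) :
    ∫ r in Set.Ioi (0:ℝ),
        (Real.cos (β * Real.tan (Real.pi * α / 2) * r ^ α) - 1) * r ^ (d - 1) * Real.exp (-(r ^ α))
      = ((Real.cos (α * (α⁻¹ * Real.arctan (β * Real.tan (Real.pi * α / 2))))) ^ (d / α)
          * Real.cos (d * (α⁻¹ * Real.arctan (β * Real.tan (Real.pi * α / 2)))) - 1)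
          * Real.Gamma (1 + d / α) / d := by
  set t₀ : ℝ := β * Real.tan (Real.pi * α / 2) with ht₀
  set s : ℝ := d / α with hs
  have hαne : α ≠ 0 := hα0.ne'
  have hs1 : -1 < s := by
    rw [hs, lt_div_iff₀ hα0]
    linarith
  have hsneg : s < 0 := div_neg_of_neg_of_pos hd0 hα0
  have hs0 : s ≠ 0 := hsneg.ne
  have hdne : d ≠ 0 := hd0.ne
  have hds : d = α * s := by rw [hs]; field_simp
  set g : ℝ → ℝ := fun u => (Real.cos (t₀*u) - 1) * u^(s-1) * Real.exp (-u) with hg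
  have hsub : α * ∫ r in Ioi (0:ℝ),
      (Real.cos (t₀ * r ^ α) - 1) * r ^ (d - 1) * Real.exp (-(r ^ α))
      = ∫ u in Ioi (0:ℝ), g u := by
    rw [← integral_comp_rpow_Ioi g hαne, ← integral_const_mul]
    refine setIntegral_congr_fun measurableSet_Ioi fun x hx => ?_
    rw [mem_Ioi] at hx
    have hxp : x ^ (α-1) * x ^ (α*(s-1)) = x ^ (d-1) := by
      rw [← Real.rpow_add hx]
      congr 1
      rw [hds]; ring
    simp only [hg, smul_eq_mul, abs_of_pos hα0]
    rw [← Real.rpow_mul hx.le α (s-1), ← hxp]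
    ring
  have hre : ∫ u in Ioi (0:ℝ), g u = (Gg s t₀).re := by
    have hint := integral_re (μ := volume.restrict (Ioi 0)) (Gg_integrable s t₀ hs1)
    simp only [RCLike.re_to_complex] at hint
    rw [Gg, ← hint]
    refine setIntegral_congr_fun measurableSet_Ioi fun u hu => ?_
    rw [mem_Ioi] at hu
    have h1 : (u:ℂ) ^ ((s:ℂ)-1) = ((u ^ (s-1) : ℝ) : ℂ) := by
      rw [Complex.ofReal_cpow hu.le]
      push_cast
      ring_nf
    have h2 : ((((t₀:ℂ)*I-1)*u)).re = -u := by simp [Complex.mul_re]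
    have h3 : ((((t₀:ℂ)*I-1)*u)).im = t₀*u := by simp [Complex.mul_im]
    rw [hg]
    simp only [RCLike.re_to_complex]
    rw [h1, Complex.re_ofReal_mul, Complex.sub_re, Complex.exp_re, Complex.exp_re,
      h2, h3]
    simp only [Complex.neg_re, Complex.neg_im, Complex.ofReal_re, Complex.ofReal_im,
      neg_zero, Real.cos_zero, mul_one]
    ring
  have hval : (Gg s t₀).re
      = Real.Gamma (s+1)/s * (Real.sqrt (1+t₀^2) ^ (-s) * Real.cos (s * Real.arctan t₀) - 1) := by
    rw [keyG s t₀ hs1 hs0,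
      show ((Real.Gamma (s+1) : ℂ)/(s:ℂ)) = ((Real.Gamma (s+1)/s : ℝ) : ℂ) by push_cast; ring,
      Complex.re_ofReal_mul, Complex.sub_re, Complex.one_re,
      cpow_real_re (one_sub_ne t₀) (-s), abs_one_sub, arg_one_sub, neg_mul_neg]
  have e1 : α * (α⁻¹ * Real.arctan t₀) = Real.arctan t₀ := by field_simp
  have e2 : d * (α⁻¹ * Real.arctan t₀) = s * Real.arctan t₀ := by
    rw [hds]; field_simp
  have e3 : Real.cos (Real.arctan t₀) ^ s = Real.sqrt (1+t₀^2) ^ (-s) := by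
    rw [Real.cos_arctan, one_div, Real.inv_rpow (Real.sqrt_nonneg _),
      ← Real.rpow_neg (Real.sqrt_nonneg _)]
  rw [e1, e2, e3, add_comm (1:ℝ) s]
  have hT := hsub
  rw [hre, hval] at hT
  have hT' := eq_div_of_mul_eq hαne (by linarith [hT] :
    (∫ r in Ioi (0:ℝ), (Real.cos (t₀ * r ^ α) - 1) * r ^ (d - 1) * Real.exp (-(r ^ α))) * α
      = Real.Gamma (s+1)/s * (Real.sqrt (1+t₀^2) ^ (-s) * Real.cos (s * Real.arctan t₀) - 1))
  rw [hT', hds]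
  field_simp
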